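/- arXiv:2511.08236 — 3 statements merged into one kernel-verified Lean document; each statement's English description precedes it below -/
import Mathlib

section
/- Let Θ ⊆ ℝᵖ be nonempty closed convex with diameter d := sup{‖a-b‖ : a,b ∈ Θ}. Consider θ̂_{k+1} = Π_Θ[θ̂_k + μ D_kᵀ(e_k + w_k)] with e_k := -D_k(θ̂_k - θ_k), θ_k, θ_{k+1} ∈ Θ, θ̂_k ∈ Θ, and μ‖D_k‖² ≤ 1. Then with φ_k := θ̂_k - θ_k and Δθ_k := θ_{k+1} - θ_k, it holds that ‖φ_{k+1}‖² - ‖φ_k‖² ≤ -μ‖e_k‖² + μ‖w_k‖² + 2d‖Δθ_k‖. -/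
open scoped RealInnerProductSpace

set_option maxHeartbeats 1000000 in
theorem lms_lyapunov_decrease {n p : ℕ}
    (Θ : Set (EuclideanSpace ℝ (Fin p)))
    (hne : Θ.Nonempty) (hclosed : IsClosed Θ) (hconv : Convex ℝ Θ)
    (d : ℝ) (hd : ∀ a ∈ Θ, ∀ b ∈ Θ, ‖a - b‖ ≤ d)
    (proj : EuclideanSpace ℝ (Fin p) → EuclideanSpace ℝ (Fin p))
    (hproj : ∀ θ, proj θ ∈ Θ ∧ ∀ y ∈ Θ, ‖proj θ - θ‖ ≤ ‖y - θ‖)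
    (D : EuclideanSpace ℝ (Fin p) →L[ℝ] EuclideanSpace ℝ (Fin n))
    (μ : ℝ) (hμ : 0 < μ) (hstep : μ * ‖D‖ ^ 2 ≤ 1)
    (θk θk1 θhatk : EuclideanSpace ℝ (Fin p))
    (hθk : θk ∈ Θ) (hθk1 : θk1 ∈ Θ) (hθhatk : θhatk ∈ Θ)
    (w : EuclideanSpace ℝ (Fin n))
    (e : EuclideanSpace ℝ (Fin n)) (he : e = -(D (θhatk - θk)))
    (θhatk1 : EuclideanSpace ℝ (Fin p))
    (hupd : θhatk1 = proj (θhatk + μ • (ContinuousLinearMap.adjoint D) (e + w))) :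
    ‖θhatk1 - θk1‖ ^ 2 - ‖θhatk - θk‖ ^ 2 ≤
      -μ * ‖e‖ ^ 2 + μ * ‖w‖ ^ 2 + 2 * d * ‖θk1 - θk‖ := by
  subst hupd
  set g := μ • (ContinuousLinearMap.adjoint D) (e + w) with hg
  set z := θhatk + g with hz
  obtain ⟨haΘ, hamin⟩ := hproj z
  set a := proj z with ha
  -- the projection satisfies the variational characterization
  haveI : Nonempty Θ := hne.to_subtype
  have hinf : ‖z - a‖ = ⨅ y : Θ, ‖z - y‖ := by
    apply le_antisymm
    · exact le_ciInf fun ⟨y, hy⟩ => by simpa [norm_sub_rev] using hamin y hy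
    · have hb : BddBelow (Set.range fun y : Θ => ‖z - y‖) := by
        refine ⟨0, ?_⟩
        rintro x ⟨y, rfl⟩
        exact norm_nonneg _
      exact ciInf_le hb ⟨a, haΘ⟩
  have hkey : ⟪z - a, θk - a⟫ ≤ 0 :=
    (norm_eq_iInf_iff_real_inner_le_zero hconv haΘ).mp hinf θk hθk
  -- Step 1: ‖a - θk‖² ≤ ‖z - θk‖²
  have h1 : ‖z - θk‖ ^ 2 = ‖z - a‖ ^ 2 + 2 * ⟪z - a, a - θk⟫ + ‖a - θk‖ ^ 2 := by
    rw [show z - θk = (z - a) + (a - θk) by abel]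
    exact norm_add_sq_real _ _
  have h2 : 0 ≤ ⟪z - a, a - θk⟫ := by
    rw [show a - θk = -(θk - a) by abel, inner_neg_right]; linarith
  have hA : ‖a - θk‖ ^ 2 ≤ ‖z - θk‖ ^ 2 := by nlinarith [sq_nonneg ‖z - a‖]
  -- Step 2: expand ‖z - θk‖²
  have hDφ : D (θhatk - θk) = -e := by rw [he]; simp
  have hexp : ‖z - θk‖ ^ 2 = ‖θhatk - θk‖ ^ 2 + 2 * ⟪θhatk - θk, g⟫ + ‖g‖ ^ 2 := by
    rw [show z - θk = (θhatk - θk) + g by rw [hz]; abel]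
    exact norm_add_sq_real _ _
  have hin : ⟪θhatk - θk, g⟫ = μ * (-(‖e‖ ^ 2) - ⟪e, w⟫) := by
    rw [hg, real_inner_smul_right, ContinuousLinearMap.adjoint_inner_right, hDφ,
      inner_neg_left, inner_add_right, real_inner_self_eq_norm_sq]
    ring
  have hnormg : ‖g‖ ≤ μ * (‖D‖ * ‖e + w‖) := by
    rw [hg, norm_smul, Real.norm_eq_abs, abs_of_pos hμ]
    have h3 := (ContinuousLinearMap.adjoint D).le_opNorm (e + w)
    rw [ContinuousLinearMap.adjoint.norm_map D] at h3
    exact mul_le_mul_of_nonneg_left h3 hμ.le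
  have hg2 : ‖g‖ ^ 2 ≤ μ * ‖e + w‖ ^ 2 := by
    have h4 : ‖g‖ ^ 2 ≤ (μ * (‖D‖ * ‖e + w‖)) ^ 2 :=
      pow_le_pow_left₀ (norm_nonneg _) hnormg 2
    have h5 : 0 ≤ (1 - μ * ‖D‖ ^ 2) * μ * ‖e + w‖ ^ 2 :=
      mul_nonneg (mul_nonneg (by linarith) hμ.le) (sq_nonneg _)
    linarith [h4, h5]
  have hew : ‖e + w‖ ^ 2 = ‖e‖ ^ 2 + 2 * ⟪e, w⟫ + ‖w‖ ^ 2 := norm_add_sq_real _ _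
  have hg2' : ‖g‖ ^ 2 ≤ μ * ‖e‖ ^ 2 + μ * (2 * ⟪e, w⟫) + μ * ‖w‖ ^ 2 := by
    rw [hew] at hg2; linarith
  have hB : ‖z - θk‖ ^ 2 ≤ ‖θhatk - θk‖ ^ 2 - μ * ‖e‖ ^ 2 + μ * ‖w‖ ^ 2 := by
    linarith [hexp, hin, hg2']
  -- Step 3: drift term
  have hd0 : 0 ≤ d := le_trans (norm_nonneg _) (hd θk hθk θk hθk)
  have hdiff : ‖a - θk1‖ ^ 2 - ‖a - θk‖ ^ 2
      = ⟪θk - θk1, (a - θk1) + (a - θk)⟫ := by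
    rw [show θk - θk1 = (a - θk1) - (a - θk) by abel, inner_sub_left,
      inner_add_right, inner_add_right, real_inner_self_eq_norm_sq,
      real_inner_self_eq_norm_sq, real_inner_comm (a - θk) (a - θk1)]
    ring
  have hCS : ⟪θk - θk1, (a - θk1) + (a - θk)⟫
      ≤ ‖θk - θk1‖ * ‖(a - θk1) + (a - θk)‖ := real_inner_le_norm _ _
  have hsum : ‖(a - θk1) + (a - θk)‖ ≤ 2 * d := by
    calc ‖(a - θk1) + (a - θk)‖ ≤ ‖a - θk1‖ + ‖a - θk‖ := norm_add_le _ _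
      _ ≤ d + d := add_le_add (hd a haΘ θk1 hθk1) (hd a haΘ θk hθk)
      _ = 2 * d := by ring
  have hrev : ‖θk - θk1‖ = ‖θk1 - θk‖ := norm_sub_rev _ _
  have hC : ‖a - θk1‖ ^ 2 - ‖a - θk‖ ^ 2 ≤ 2 * d * ‖θk1 - θk‖ := by
    rw [hdiff]
    calc ⟪θk - θk1, (a - θk1) + (a - θk)⟫
        ≤ ‖θk - θk1‖ * ‖(a - θk1) + (a - θk)‖ := hCS
      _ ≤ ‖θk1 - θk‖ * (2 * d) := by
          rw [hrev]; exact mul_le_mul_of_nonneg_left hsum (norm_nonneg _)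
      _ = 2 * d * ‖θk1 - θk‖ := by ring
  linarith
end

section
/- Let P, Q, R, A, B, K be as in the LQR setting with P solving the Riccati equation and K the optimal gain, and suppose Q ⪰ q̲ I and P ⪯ p̄ I with q̲, p̄ > 0. Then for any ε > 0 and any x, e ∈ ℝⁿ (with x_+ := (A+BK)x + e): ‖x_+‖²_P - ‖x‖²_P ≤ -((1+ε)q̲ - ε p̄)‖x‖² + (1 + 1/ε) p̄ ‖e‖². -/
open Matrix

lemma psd_quad {n : ℕ} {M : Matrix (Fin n) (Fin n) ℝ} (hM : M.PosSemidef)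
    (v : Fin n → ℝ) : 0 ≤ v ⬝ᵥ M *ᵥ v := by
  simpa using hM.dotProduct_mulVec_nonneg v

lemma sym_dot {n : ℕ} {M : Matrix (Fin n) (Fin n) ℝ} (hM : M.IsHermitian)
    (v w : Fin n → ℝ) : v ⬝ᵥ M *ᵥ w = w ⬝ᵥ M *ᵥ v := by
  rw [dotProduct_mulVec, ← mulVec_transpose, dotProduct_comm]
  congr 1
  rw [show Mᵀ = M from by simpa [IsHermitian] using hM]

lemma quad_conj {n m : ℕ} (M : Matrix (Fin m) (Fin n) ℝ)
    (N : Matrix (Fin m) (Fin m) ℝ) (x : Fin n → ℝ) :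
    x ⬝ᵥ (Mᵀ * N * M) *ᵥ x = (M *ᵥ x) ⬝ᵥ N *ᵥ (M *ᵥ x) := by
  rw [← mulVec_mulVec, ← mulVec_mulVec, dotProduct_mulVec, vecMul_transpose]

theorem lqr_robust_decrease {n m : ℕ}
    (P Q : Matrix (Fin n) (Fin n) ℝ) (R : Matrix (Fin m) (Fin m) ℝ)
    (A : Matrix (Fin n) (Fin n) ℝ) (B : Matrix (Fin n) (Fin m) ℝ)
    (K : Matrix (Fin m) (Fin n) ℝ)
    (hP : P.PosDef) (hQ : Q.PosDef) (hR : R.PosDef)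
    (hRic : P = (A + B * K)ᵀ * P * (A + B * K) + Q + Kᵀ * R * K)
    (q p : ℝ) (hq : 0 < q) (hp : 0 < p)
    (hQlb : (Q - q • (1 : Matrix (Fin n) (Fin n) ℝ)).PosSemidef)
    (hPub : ((p • (1 : Matrix (Fin n) (Fin n) ℝ)) - P).PosSemidef)
    (ε : ℝ) (hε : 0 < ε) (x e : Fin n → ℝ) (xp : Fin n → ℝ)
    (hxp : xp = (A + B * K) *ᵥ x + e) :
    xp ⬝ᵥ P *ᵥ xp - x ⬝ᵥ P *ᵥ x ≤
      -((1 + ε) * q - ε * p) * (x ⬝ᵥ x) + (1 + 1 / ε) * p * (e ⬝ᵥ e) := by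
  set y := (A + B * K) *ᵥ x with hy
  have hsym := sym_dot hP.1
  have hexp : xp ⬝ᵥ P *ᵥ xp
      = y ⬝ᵥ P *ᵥ y + 2 * (y ⬝ᵥ P *ᵥ e) + e ⬝ᵥ P *ᵥ e := by
    rw [hxp]
    simp [mulVec_add, dotProduct_add, add_dotProduct, hsym e y]
    ring
  have hric : x ⬝ᵥ P *ᵥ x
      = y ⬝ᵥ P *ᵥ y + x ⬝ᵥ Q *ᵥ x + (K *ᵥ x) ⬝ᵥ R *ᵥ (K *ᵥ x) := by
    conv_lhs => rw [hRic]
    rw [add_mulVec, add_mulVec, dotProduct_add, dotProduct_add,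
      quad_conj (A + B * K) P x, quad_conj K R x]
  have hQx : q * (x ⬝ᵥ x) ≤ x ⬝ᵥ Q *ᵥ x := by
    have := psd_quad hQlb x
    simpa [sub_mulVec, dotProduct_sub, smul_mulVec, dotProduct_smul, sub_nonneg] using this
  have hPx : x ⬝ᵥ P *ᵥ x ≤ p * (x ⬝ᵥ x) := by
    have := psd_quad hPub x
    simpa [sub_mulVec, dotProduct_sub, smul_mulVec, dotProduct_smul, sub_nonneg] using this
  have hPe : e ⬝ᵥ P *ᵥ e ≤ p * (e ⬝ᵥ e) := by
    have := psd_quad hPub e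
    simpa [sub_mulVec, dotProduct_sub, smul_mulVec, dotProduct_smul, sub_nonneg] using this
  have hKx : 0 ≤ (K *ᵥ x) ⬝ᵥ R *ᵥ (K *ᵥ x) := psd_quad hR.posSemidef _
  have hyoung : 2 * ε * (y ⬝ᵥ P *ᵥ e) ≤ ε^2 * (y ⬝ᵥ P *ᵥ y) + e ⬝ᵥ P *ᵥ e := by
    have h0 := psd_quad hP.posSemidef (ε • y - e)
    have hexp2 : (ε • y - e) ⬝ᵥ P *ᵥ (ε • y - e)
        = ε^2 * (y ⬝ᵥ P *ᵥ y) - 2 * ε * (y ⬝ᵥ P *ᵥ e) + e ⬝ᵥ P *ᵥ e := by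
      simp [mulVec_sub, dotProduct_sub, sub_dotProduct, smul_mulVec,
        mulVec_smul, dotProduct_smul, smul_dotProduct, hsym e y]
      ring
    linarith [hexp2 ▸ h0]
  have hεne : ε ≠ 0 := ne_of_gt hε
  have h2 : 2 * (y ⬝ᵥ P *ᵥ e) ≤ ε * (y ⬝ᵥ P *ᵥ y) + (1/ε) * (e ⬝ᵥ P *ᵥ e) := by
    calc 2 * (y ⬝ᵥ P *ᵥ e) = ε⁻¹ * (2 * ε * (y ⬝ᵥ P *ᵥ e)) := by field_simp
    _ ≤ ε⁻¹ * (ε^2 * (y ⬝ᵥ P *ᵥ y) + e ⬝ᵥ P *ᵥ e) := by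
        apply mul_le_mul_of_nonneg_left hyoung; positivity
    _ = ε * (y ⬝ᵥ P *ᵥ y) + (1/ε) * (e ⬝ᵥ P *ᵥ e) := by field_simp
  have hb1 : y ⬝ᵥ P *ᵥ y ≤ x ⬝ᵥ P *ᵥ x - q * (x ⬝ᵥ x) := by linarith
  have hb2 : ε * (y ⬝ᵥ P *ᵥ y) ≤ ε * (p * (x ⬝ᵥ x) - q * (x ⬝ᵥ x)) := by
    apply mul_le_mul_of_nonneg_left _ (le_of_lt hε); linarith
  have hc1 : (1/ε) * (e ⬝ᵥ P *ᵥ e) ≤ (1/ε) * (p * (e ⬝ᵥ e)) := by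
    apply mul_le_mul_of_nonneg_left hPe; positivity
  rw [hexp]
  have hexpand : -((1 + ε) * q - ε * p) * (x ⬝ᵥ x)
      = -(q * (x ⬝ᵥ x)) + ε * (p * (x ⬝ᵥ x) - q * (x ⬝ᵥ x)) := by ring
  have hexpand2 : (1 + 1 / ε) * p * (e ⬝ᵥ e)
      = p * (e ⬝ᵥ e) + (1/ε) * (p * (e ⬝ᵥ e)) := by ring
  linarith
end

section
/- Let M, N ∈ ℝ^{n×n} satisfy ‖Mⁱ‖ ≤ Cρⁱ and ‖Nⁱ‖ ≤ Cρⁱ for all i, with C > 0 and 0 ≤ ρ < 1. Then ∑_{j=0}^∞ ‖Mʲ - Nʲ‖² ≤ C⁴ ‖M-N‖² (1+ρ²)/(1-ρ²)³. -/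
open scoped Matrix.Norms.L2Operator

private lemma aux_hasSum {x : ℝ} (h0 : 0 ≤ x) (h1 : x < 1) :
    HasSum (fun j : ℕ => (j : ℝ) ^ 2 * x ^ (j - 1)) ((1 + x) / (1 - x) ^ 3) := by
  have hx : ‖x‖ < 1 := by rwa [Real.norm_eq_abs, abs_of_nonneg h0]
  have hne : (1 : ℝ) - x ≠ 0 := by nlinarith
  have A := hasSum_choose_mul_geometric_of_norm_lt_one 2 hx
  have B := hasSum_choose_mul_geometric_of_norm_lt_one 1 hx
  have H := (A.mul_left 2).sub B
  have hval : 2 * (1 / (1 - x) ^ (2 + 1)) - 1 / (1 - x) ^ (1 + 1)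
      = (1 + x) / (1 - x) ^ 3 := by
    field_simp
    ring
  have H' : HasSum (fun j : ℕ => ((j + 1 : ℕ) : ℝ) ^ 2 * x ^ ((j + 1) - 1))
      ((1 + x) / (1 - x) ^ 3) := by
    rw [← hval]
    convert H using 1
    · rfl
    funext b
    simp only [Nat.add_sub_cancel, Nat.cast_choose_two, Nat.choose_one_right]
    push_cast
    ring
  refine (hasSum_nat_add_iff' (f := fun j : ℕ => (j : ℝ) ^ 2 * x ^ (j - 1)) 1).mp ?_
  simpa using H'

private lemma pow_sub_pow_eq {R : Type*} [Ring R] (M N : R) (j : ℕ) :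
    M ^ j - N ^ j = ∑ i ∈ Finset.range j, M ^ i * (M - N) * N ^ (j - 1 - i) := by
  induction j with
  | zero => simp
  | succ j ih =>
    rw [Finset.sum_range_succ]
    have h1 : ∀ i ∈ Finset.range j, M ^ i * (M - N) * N ^ (j + 1 - 1 - i)
        = (M ^ i * (M - N) * N ^ (j - 1 - i)) * N := by
      intro i hi
      rw [Finset.mem_range] at hi
      rw [show j + 1 - 1 - i = (j - 1 - i) + 1 by omega, pow_succ, ← mul_assoc]
    rw [Finset.sum_congr rfl h1, ← Finset.sum_mul, ← ih]
    simp only [Nat.add_sub_cancel, Nat.sub_self, pow_zero, mul_one]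
    rw [pow_succ, pow_succ]
    noncomm_ring

theorem power_diff_sq_summable_bound {n : ℕ}
    (M N : Matrix (Fin n) (Fin n) ℝ)
    (C ρ : ℝ) (hC : 0 < C) (hρ0 : 0 ≤ ρ) (hρ1 : ρ < 1)
    (hM : ∀ i : ℕ, ‖M ^ i‖ ≤ C * ρ ^ i) (hN : ∀ i : ℕ, ‖N ^ i‖ ≤ C * ρ ^ i) :
    (Summable fun j : ℕ => ‖M ^ j - N ^ j‖ ^ 2) ∧
      ∑' j : ℕ, ‖M ^ j - N ^ j‖ ^ 2 ≤
        C ^ 4 * ‖M - N‖ ^ 2 * (1 + ρ ^ 2) / (1 - ρ ^ 2) ^ 3 := by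
  -- key linear bound
  have key : ∀ j : ℕ, ‖M ^ j - N ^ j‖ ≤ C ^ 2 * j * ρ ^ (j - 1) * ‖M - N‖ := by
    intro j
    rw [pow_sub_pow_eq M N j]
    calc ‖∑ i ∈ Finset.range j, M ^ i * (M - N) * N ^ (j - 1 - i)‖
        ≤ ∑ i ∈ Finset.range j, ‖M ^ i * (M - N) * N ^ (j - 1 - i)‖ :=
          norm_sum_le _ _
      _ ≤ ∑ i ∈ Finset.range j, C ^ 2 * ρ ^ (j - 1) * ‖M - N‖ := by
          apply Finset.sum_le_sum
          intro i hi
          rw [Finset.mem_range] at hi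
          have h1 : ‖M ^ i * (M - N) * N ^ (j - 1 - i)‖
              ≤ ‖M ^ i‖ * ‖M - N‖ * ‖N ^ (j - 1 - i)‖ :=
            le_trans (norm_mul_le _ _)
              (mul_le_mul_of_nonneg_right (norm_mul_le _ _) (norm_nonneg _))
          refine h1.trans ?_
          have h2 : ‖M ^ i‖ * ‖M - N‖ * ‖N ^ (j - 1 - i)‖
              ≤ (C * ρ ^ i) * ‖M - N‖ * (C * ρ ^ (j - 1 - i)) :=
            mul_le_mul
              (mul_le_mul_of_nonneg_right (hM i) (norm_nonneg _)) (hN _)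
              (norm_nonneg _)
              (mul_nonneg (mul_nonneg hC.le (pow_nonneg hρ0 i)) (norm_nonneg _))
          refine h2.trans (le_of_eq ?_)
          have h3 : ρ ^ i * ρ ^ (j - 1 - i) = ρ ^ (j - 1) := by
            rw [← pow_add]
            congr 1
            omega
          calc C * ρ ^ i * ‖M - N‖ * (C * ρ ^ (j - 1 - i))
              = C ^ 2 * (ρ ^ i * ρ ^ (j - 1 - i)) * ‖M - N‖ := by ring
            _ = C ^ 2 * ρ ^ (j - 1) * ‖M - N‖ := by rw [h3]
      _ = C ^ 2 * j * ρ ^ (j - 1) * ‖M - N‖ := by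
          rw [Finset.sum_const, Finset.card_range, nsmul_eq_mul]
          ring
  -- squared bound
  have keysq : ∀ j : ℕ, ‖M ^ j - N ^ j‖ ^ 2
      ≤ C ^ 4 * ‖M - N‖ ^ 2 * ((j : ℝ) ^ 2 * (ρ ^ 2) ^ (j - 1)) := by
    intro j
    have h := key j
    have h0 : (0:ℝ) ≤ ‖M ^ j - N ^ j‖ := norm_nonneg _
    have := mul_self_le_mul_self h0 h
    calc ‖M ^ j - N ^ j‖ ^ 2 = ‖M ^ j - N ^ j‖ * ‖M ^ j - N ^ j‖ := sq ..
      _ ≤ (C ^ 2 * j * ρ ^ (j - 1) * ‖M - N‖) * (C ^ 2 * j * ρ ^ (j - 1) * ‖M - N‖) :=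
          this
      _ = C ^ 4 * ‖M - N‖ ^ 2 * ((j : ℝ) ^ 2 * (ρ ^ 2) ^ (j - 1)) := by
          rw [← pow_mul, mul_comm 2 (j-1), pow_mul]
          ring
  have hx0 : (0:ℝ) ≤ ρ ^ 2 := sq_nonneg ρ
  have hx1 : ρ ^ 2 < 1 := by nlinarith
  have hS := (aux_hasSum hx0 hx1).mul_left (C ^ 4 * ‖M - N‖ ^ 2)
  have hsummable : Summable fun j : ℕ => ‖M ^ j - N ^ j‖ ^ 2 := by
    apply Summable.of_nonneg_of_le (fun j => sq_nonneg _) keysq hS.summable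
  refine ⟨hsummable, ?_⟩
  have := Summable.tsum_le_tsum keysq hsummable hS.summable
  rw [hS.tsum_eq] at this
  refine this.trans (le_of_eq ?_)
  ring
end
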